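/- For all real α, β > 1/2, the multivariate Beta function satisfies B₂(α, β+1) = (β(β−1/2))/((α+β)(α+β−1/2)) · B₂(α, β). -/

import Mathlib

open MeasureTheory Real Filter Finset

def Omega : Set (ℝ × ℝ × ℝ) :=
  {p | 0 < p.1 ∧ 0 < 1 - p.1 ∧ 0 < p.1 * p.2.1 - p.2.2 ^ 2 ∧
    0 < (1 - p.1) * (1 - p.2.1) - p.2.2 ^ 2}

noncomputable def betaDens (α β : ℝ) (p : ℝ × ℝ × ℝ) : ℝ :=
  ((1 - p.1) * (1 - p.2.1) - p.2.2 ^ 2) ^ (α - 3/2) *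
    (p.1 * p.2.1 - p.2.2 ^ 2) ^ (β - 3/2)

noncomputable def B2 (α β : ℝ) : ℝ := ∫ p in Omega, betaDens α β p

noncomputable def Eab (α β : ℝ) (f : ℝ × ℝ × ℝ → ℝ) : ℝ :=
  (B2 α β)⁻¹ * ∫ p in Omega, f p * betaDens α β p

section Aux

open Set ENNReal

lemma mrpow' : Measurable (fun p : ℝ × ℝ => p.1 ^ p.2) := by measurability

lemma Measurable.rpow_const' {δ : Type*} [MeasurableSpace δ] {f : δ → ℝ} (hf : Measurable f)
    (c : ℝ) : Measurable (fun x => f x ^ c) :=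
  mrpow'.comp (hf.prodMk measurable_const)

/-! ### 1D beta integrals -/

noncomputable def Jr (a b : ℝ) : ℝ := Real.Gamma a * Real.Gamma b / Real.Gamma (a + b)

noncomputable def Jl (a b : ℝ) : ℝ≥0∞ :=
  ∫⁻ x in Set.Ioo (0:ℝ) 1, ENNReal.ofReal (x ^ (a-1) * (1-x) ^ (b-1))

lemma Jl_def (a b : ℝ) :
    Jl a b = ∫⁻ x in Set.Ioo (0:ℝ) 1, ENNReal.ofReal (x ^ (a-1) * (1-x) ^ (b-1)) := rfl

lemma Jr_pos {a b : ℝ} (ha : 0 < a) (hb : 0 < b) : 0 < Jr a b :=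
  div_pos (mul_pos (Real.Gamma_pos_of_pos ha) (Real.Gamma_pos_of_pos hb))
    (Real.Gamma_pos_of_pos (by linarith))

lemma Jl_eq {a b : ℝ} (ha : 0 < a) (hb : 0 < b) : Jl a b = ENNReal.ofReal (Jr a b) := by
  have hc : IntervalIntegrable (fun x : ℝ => (x:ℂ) ^ ((a:ℂ) - 1) * (1 - (x:ℂ)) ^ ((b:ℂ) - 1))
      volume 0 1 := Complex.betaIntegral_convergent (by simpa) (by simpa)
  have hEq : Set.EqOn (fun x : ℝ => ‖(x:ℂ) ^ ((a:ℂ) - 1) * (1 - (x:ℂ)) ^ ((b:ℂ) - 1)‖)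
      (fun x : ℝ => x ^ (a-1) * (1-x) ^ (b-1)) (Set.Ioo 0 1) := by
    intro x hx
    have hx0 : (0:ℝ) < x := hx.1
    have hx1 : (0:ℝ) < 1 - x := by linarith [hx.2]
    simp only [norm_mul]
    rw [show (1 - (x:ℂ)) = ((1 - x : ℝ) : ℂ) by push_cast; ring,
      Complex.norm_cpow_eq_rpow_re_of_pos hx0, Complex.norm_cpow_eq_rpow_re_of_pos hx1]
    norm_num
  have hInt : IntegrableOn (fun x : ℝ => x ^ (a-1) * (1-x) ^ (b-1)) (Set.Ioo 0 1) volume := by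
    have h := hc.norm.1
    exact (h.mono_set Set.Ioo_subset_Ioc_self).congr_fun hEq measurableSet_Ioo
  have hae : 0 ≤ᶠ[ae (volume.restrict (Set.Ioo (0:ℝ) 1))]
      (fun x : ℝ => x ^ (a-1) * (1-x) ^ (b-1)) := by
    filter_upwards [ae_restrict_mem measurableSet_Ioo] with x hx
    exact mul_nonneg (Real.rpow_nonneg hx.1.le _) (Real.rpow_nonneg (by linarith [hx.2]) _)
  have h1 : Jl a b = ENNReal.ofReal (∫ x in Set.Ioo (0:ℝ) 1, x ^ (a-1) * (1-x) ^ (b-1)) :=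
    (ofReal_integral_eq_lintegral_ofReal hInt hae).symm
  have h2 : (∫ x in Set.Ioo (0:ℝ) 1, x ^ (a-1) * (1-x) ^ (b-1))
      = ∫ x in (0:ℝ)..1, x ^ (a-1) * (1-x) ^ (b-1) := by
    rw [intervalIntegral.integral_of_le zero_le_one, integral_Ioc_eq_integral_Ioo]
  have h3 : Complex.betaIntegral (a:ℂ) (b:ℂ)
      = ((∫ x in (0:ℝ)..1, x ^ (a-1) * (1-x) ^ (b-1) : ℝ) : ℂ) := by
    rw [Complex.betaIntegral, ← intervalIntegral.integral_ofReal]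
    apply intervalIntegral.integral_congr
    intro x hx
    rw [Set.uIcc_of_le zero_le_one] at hx
    have hx0 : (0:ℝ) ≤ x := hx.1
    have hx1 : (0:ℝ) ≤ 1 - x := by linarith [hx.2]
    simp only [Complex.ofReal_mul]
    rw [Complex.ofReal_cpow hx0, Complex.ofReal_cpow hx1]
    push_cast
    ring
  have hG : Real.Gamma a * Real.Gamma b
      = Real.Gamma (a + b) * ∫ x in (0:ℝ)..1, x ^ (a-1) * (1-x) ^ (b-1) := by
    have := Complex.Gamma_mul_Gamma_eq_betaIntegral (s := (a:ℂ)) (t := (b:ℂ))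
      (by simpa) (by simpa)
    rw [h3, Complex.Gamma_ofReal, Complex.Gamma_ofReal] at this
    rw [show ((a:ℂ) + b) = ((a + b : ℝ) : ℂ) by push_cast; ring, Complex.Gamma_ofReal] at this
    exact_mod_cast this
  have hGab : Real.Gamma (a + b) ≠ 0 := (Real.Gamma_pos_of_pos (by linarith)).ne'
  rw [h1, h2, Jr]
  congr 1
  field_simp at hG ⊢
  linarith [hG]

/-! ### 3D reduction -/

noncomputable def Cl (α : ℝ) : ℝ≥0∞ :=
  ∫⁻ s in Set.Ioo (-1:ℝ) 1, ENNReal.ofReal ((1-s^2)^(α-3/2))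

lemma Cl_def (α : ℝ) :
    Cl α = ∫⁻ s in Set.Ioo (-1:ℝ) 1, ENNReal.ofReal ((1-s^2)^(α-3/2)) := rfl

noncomputable def dns (α β x y z : ℝ) : ℝ≥0∞ :=
  if 0 < x ∧ 0 < 1-x ∧ 0 < x*y - z^2 ∧ 0 < (1-x)*(1-y) - z^2
  then ENNReal.ofReal (((1-x)*(1-y)-z^2)^(α-3/2) * (x*y-z^2)^(β-3/2)) else 0

noncomputable def g2 (α β x c z : ℝ) : ℝ≥0∞ :=
  if 0 < c ∧ 0 < (1-x)*(1-c) - z^2/x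
  then ENNReal.ofReal (((1-x)*(1-c) - z^2/x)^(α-3/2) * (x*c)^(β-3/2)) else 0

lemma mdens3 (α β : ℝ) : Measurable (fun p : ℝ×ℝ×ℝ => dns α β p.1 p.2.1 p.2.2) := by
  unfold dns
  have h1 : Measurable (fun p : ℝ×ℝ×ℝ => (1-p.1)*(1-p.2.1)-p.2.2^2) := by fun_prop
  have h2 : Measurable (fun p : ℝ×ℝ×ℝ => p.1*p.2.1-p.2.2^2) := by fun_prop
  refine Measurable.ite ?_
    (ENNReal.measurable_ofReal.comp ((h1.rpow_const' _).mul (h2.rpow_const' _)))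
    measurable_const
  exact (((isOpen_lt continuous_const (by fun_prop)).and
    ((isOpen_lt continuous_const (by fun_prop)).and
    ((isOpen_lt continuous_const (by fun_prop)).and
    (isOpen_lt continuous_const (by fun_prop))))).measurableSet)

lemma mdens2 (α β x : ℝ) : Measurable (fun q : ℝ×ℝ => dns α β x q.1 q.2) := by
  have := (mdens3 α β).comp (f := fun q : ℝ×ℝ => (x, q)) (by fun_prop)
  exact this

lemma mg2 (α β x : ℝ) : Measurable (fun q : ℝ×ℝ => g2 α β x q.1 q.2) := by
  unfold g2
  have h1 : Measurable (fun q : ℝ×ℝ => (1-x)*(1-q.1)-q.2^2/x) := by fun_prop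
  have h2 : Measurable (fun q : ℝ×ℝ => x*q.1) := by fun_prop
  refine Measurable.ite ?_
    (ENNReal.measurable_ofReal.comp ((h1.rpow_const' _).mul (h2.rpow_const' _)))
    measurable_const
  exact (((isOpen_lt continuous_const (by fun_prop)).and
    (isOpen_lt continuous_const (by fun_prop))).measurableSet)

lemma mg1 (α β x c : ℝ) : Measurable (fun z => g2 α β x c z) := by
  have := (mg2 α β x).comp (f := fun z : ℝ => (c, z)) (by fun_prop)
  exact this

lemma mker (α : ℝ) : Measurable (fun s : ℝ => ENNReal.ofReal ((1-s^2)^(α-3/2))) := by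
  have h1 : Measurable (fun s : ℝ => 1-s^2) := by fun_prop
  exact ENNReal.measurable_ofReal.comp (h1.rpow_const' _)

lemma mJ (a b : ℝ) : Measurable (fun x : ℝ => ENNReal.ofReal (x^(a-1)*(1-x)^(b-1))) := by
  have h1 : Measurable (fun x : ℝ => x) := measurable_id
  have h2 : Measurable (fun x : ℝ => 1-x) := by fun_prop
  exact ENNReal.measurable_ofReal.comp ((h1.rpow_const' _).mul (h2.rpow_const' _))

lemma lint_scale (g : ℝ → ℝ≥0∞) (hg : Measurable g) {r : ℝ} (hr : 0 < r) :
    ∫⁻ z, g z = ENNReal.ofReal r * ∫⁻ s, g (r*s) := by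
  have h1 : ∫⁻ s, g (r*s) = ENNReal.ofReal r⁻¹ * ∫⁻ z, g z := by
    rw [← lintegral_map hg (measurable_const_mul r), Real.map_volume_mul_left hr.ne',
      lintegral_smul_measure, abs_of_pos (inv_pos.2 hr), smul_eq_mul]
  rw [h1, ← mul_assoc, ← ENNReal.ofReal_mul hr.le, mul_inv_cancel₀ hr.ne',
    ENNReal.ofReal_one, one_mul]

lemma shear_eq (α β x z : ℝ) (hx : 0 < x) (hx1 : x < 1) (c : ℝ) :
    dns α β x (c + z^2/x) z = g2 α β x c z := by
  have e1 : x*(c + z^2/x) - z^2 = x*c := by field_simp; ring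
  have e2 : (1-x)*(1-(c + z^2/x)) - z^2 = (1-x)*(1-c) - z^2/x := by field_simp; ring
  unfold dns g2
  rw [e1, e2]
  refine if_congr ?_ rfl rfl
  constructor
  · rintro ⟨-, -, h3, h4⟩
    refine ⟨?_, h4⟩
    rcases mul_pos_iff.mp h3 with ⟨-, h⟩ | ⟨h, -⟩
    · exact h
    · linarith
  · rintro ⟨h1, h2⟩
    exact ⟨hx, by linarith, mul_pos hx h1, h2⟩

lemma scale_eq (α β x c : ℝ) (hx : 0 < x) (hx1 : x < 1) (hc : 0 < c) (hc1 : c < 1) (s : ℝ) :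
    g2 α β x c (Real.sqrt (x*((1-x)*(1-c))) * s)
      = (Set.Ioo (-1:ℝ) 1).indicator
          (fun s => ENNReal.ofReal (((1-x)*(1-c))^(α-3/2) * (x*c)^(β-3/2))
            * ENNReal.ofReal ((1-s^2)^(α-3/2))) s := by
  have h1x : (0:ℝ) < 1 - x := by linarith
  have h1c : (0:ℝ) < 1 - c := by linarith
  have hprod : (0:ℝ) ≤ x*((1-x)*(1-c)) := by positivity
  have hsq : (Real.sqrt (x*((1-x)*(1-c))) * s)^2 / x = (1-x)*(1-c)*s^2 := by
    rw [mul_pow, Real.sq_sqrt hprod]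
    field_simp
  have e2 : (1-x)*(1-c) - (Real.sqrt (x*((1-x)*(1-c))) * s)^2 / x
      = ((1-x)*(1-c))*(1-s^2) := by rw [hsq]; ring
  unfold g2
  rw [e2]
  by_cases hs : s ∈ Set.Ioo (-1:ℝ) 1
  · have hs2 : (0:ℝ) < 1 - s^2 := by nlinarith [hs.1, hs.2]
    rw [Set.indicator_of_mem hs, if_pos ⟨hc, by positivity⟩]
    rw [Real.mul_rpow (by positivity) hs2.le, ← ENNReal.ofReal_mul (by positivity)]
    ring_nf
  · have hs2 : ¬ (0:ℝ) < 1 - s^2 := by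
      simp only [Set.mem_Ioo, not_and_or, not_lt] at hs
      rcases hs with h | h <;> nlinarith
    rw [Set.indicator_of_notMem hs, if_neg]
    rintro ⟨-, h⟩
    rcases mul_pos_iff.mp h with ⟨-, h'⟩ | ⟨h', -⟩
    · exact hs2 h'
    · nlinarith

lemma step_z (α β x c : ℝ) (hx : 0 < x) (hx1 : x < 1) :
    ∫⁻ z, g2 α β x c z
      = (Set.Ioo (0:ℝ) 1).indicator
          (fun c => ENNReal.ofReal (c^(β-1/2-1)*(1-c)^(α-1))
            * (ENNReal.ofReal (x^(β-1)*(1-x)^(α-1)) * Cl α)) c := by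
  by_cases hc : c ∈ Set.Ioo (0:ℝ) 1
  · obtain ⟨hc0, hc1⟩ := hc
    have h1x : (0:ℝ) < 1 - x := by linarith
    have h1c : (0:ℝ) < 1 - c := by linarith
    set r : ℝ := Real.sqrt (x*((1-x)*(1-c))) with hr
    have hrpos : 0 < r := Real.sqrt_pos.2 (by positivity)
    rw [lint_scale _ (mg1 α β x c) hrpos]
    rw [lintegral_congr (scale_eq α β x c hx hx1 hc0 hc1),
      lintegral_indicator measurableSet_Ioo, lintegral_const_mul _ (mker α), ← Cl_def,
      Set.indicator_of_mem (Set.mem_Ioo.mpr ⟨hc0, hc1⟩)]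
    have hkey : r * (((1-x)*(1-c))^(α-3/2) * (x*c)^(β-3/2))
        = (c^(β-1/2-1)*(1-c)^(α-1)) * (x^(β-1)*(1-x)^(α-1)) := by
      have exx : x^(1/2:ℝ) * x^(β-3/2) = x^(β-1) := by
        rw [← Real.rpow_add hx]; congr 1; ring
      have e1x : (1-x)^(1/2:ℝ) * (1-x)^(α-3/2) = (1-x)^(α-1) := by
        rw [← Real.rpow_add h1x]; congr 1; ring
      have e1c : (1-c)^(1/2:ℝ) * (1-c)^(α-3/2) = (1-c)^(α-1) := by
        rw [← Real.rpow_add h1c]; congr 1; ring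
      have hrr : r = x^(1/2:ℝ) * ((1-x)^(1/2:ℝ) * (1-c)^(1/2:ℝ)) := by
        rw [hr, Real.sqrt_mul hx.le, Real.sqrt_mul h1x.le, Real.sqrt_eq_rpow,
          Real.sqrt_eq_rpow, Real.sqrt_eq_rpow]
      rw [hrr, Real.mul_rpow h1x.le h1c.le, Real.mul_rpow hx.le hc0.le]
      calc x^(1/2:ℝ) * ((1-x)^(1/2:ℝ) * (1-c)^(1/2:ℝ))
            * (((1-x)^(α-3/2) * (1-c)^(α-3/2)) * (x^(β-3/2) * c^(β-3/2)))
          = (x^(1/2:ℝ) * x^(β-3/2)) * ((1-x)^(1/2:ℝ) * (1-x)^(α-3/2))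
            * ((1-c)^(1/2:ℝ) * (1-c)^(α-3/2)) * c^(β-3/2) := by ring
        _ = x^(β-1) * (1-x)^(α-1) * (1-c)^(α-1) * c^(β-3/2) := by rw [exx, e1x, e1c]
        _ = (c^(β-1/2-1)*(1-c)^(α-1)) * (x^(β-1)*(1-x)^(α-1)) := by
            rw [show β-1/2-1 = β-3/2 by ring]; ring
    calc ENNReal.ofReal r
          * (ENNReal.ofReal (((1-x)*(1-c))^(α-3/2) * (x*c)^(β-3/2)) * Cl α)
        = ENNReal.ofReal (r * (((1-x)*(1-c))^(α-3/2) * (x*c)^(β-3/2))) * Cl α := by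
          rw [ENNReal.ofReal_mul hrpos.le]; ring
      _ = ENNReal.ofReal ((c^(β-1/2-1)*(1-c)^(α-1)) * (x^(β-1)*(1-x)^(α-1))) * Cl α := by
          rw [hkey]
      _ = ENNReal.ofReal (c^(β-1/2-1)*(1-c)^(α-1))
            * (ENNReal.ofReal (x^(β-1)*(1-x)^(α-1)) * Cl α) := by
          rw [ENNReal.ofReal_mul (by positivity)]; ring
  · rw [Set.indicator_of_notMem hc]
    have hz : ∀ z, g2 α β x c z = 0 := by
      intro z
      unfold g2
      rw [if_neg]
      rintro ⟨h1, h2⟩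
      simp only [Set.mem_Ioo, not_and_or, not_lt] at hc
      rcases hc with h | h
      · exact absurd h1 (not_lt.2 h)
      · have : (1-x)*(1-c) ≤ 0 := mul_nonpos_of_nonneg_of_nonpos (by linarith) (by linarith)
        have hzx : 0 ≤ z^2/x := by positivity
        linarith
    simp [hz]

lemma step_x (α β x : ℝ) :
    (∫⁻ y, ∫⁻ z, dns α β x y z)
      = (Set.Ioo (0:ℝ) 1).indicator
          (fun x => ENNReal.ofReal (x^(β-1)*(1-x)^(α-1)) * (Jl (β-1/2) α * Cl α)) x := by
  by_cases hx : x ∈ Set.Ioo (0:ℝ) 1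
  · obtain ⟨hx0, hx1⟩ := hx
    have hswap1 : (∫⁻ y, ∫⁻ z, dns α β x y z) = ∫⁻ z, ∫⁻ y, dns α β x y z :=
      lintegral_lintegral_swap (mdens2 α β x).aemeasurable
    have htrans : ∀ z, (∫⁻ y, dns α β x y z) = ∫⁻ c, g2 α β x c z := by
      intro z
      rw [← lintegral_add_right_eq_self (fun y => dns α β x y z) (z^2/x)]
      exact lintegral_congr (fun c => shear_eq α β x z hx0 hx1 c)
    have hswap2 : (∫⁻ z, ∫⁻ c, g2 α β x c z) = ∫⁻ c, ∫⁻ z, g2 α β x c z :=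
      lintegral_lintegral_swap (f := fun z c => g2 α β x c z)
        ((mg2 α β x).comp measurable_swap).aemeasurable
    rw [hswap1, lintegral_congr htrans, hswap2,
      lintegral_congr (fun c => step_z α β x c hx0 hx1),
      lintegral_indicator measurableSet_Ioo,
      lintegral_mul_const _ (mJ (β-1/2) α), ← Jl_def,
      Set.indicator_of_mem (Set.mem_Ioo.mpr ⟨hx0, hx1⟩)]
    ring
  · have hz : ∀ y z, dns α β x y z = 0 := by
      intro y z
      unfold dns
      rw [if_neg]
      rintro ⟨h1, h2, -, -⟩
      simp only [Set.mem_Ioo, not_and_or, not_lt] at hx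
      rcases hx with h | h <;> linarith
    rw [Set.indicator_of_notMem hx]
    simp [hz]

lemma triple (α β : ℝ) :
    (∫⁻ p : ℝ×ℝ×ℝ, dns α β p.1 p.2.1 p.2.2) = Cl α * (Jl β α * Jl (β-1/2) α) := by
  rw [MeasureTheory.Measure.volume_eq_prod, lintegral_prod _ (mdens3 α β).aemeasurable]
  have hinner : ∀ x, (∫⁻ q : ℝ×ℝ, dns α β x q.1 q.2) = ∫⁻ y, ∫⁻ z, dns α β x y z := by
    intro x
    rw [MeasureTheory.Measure.volume_eq_prod, lintegral_prod _ (mdens2 α β x).aemeasurable]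
  rw [lintegral_congr (fun x => (hinner x).trans (step_x α β x)),
    lintegral_indicator measurableSet_Ioo, lintegral_mul_const _ (mJ β α), ← Jl_def]
  ring

lemma omega_measurableSet : MeasurableSet Omega := by
  exact (((isOpen_lt continuous_const (by fun_prop)).and
    ((isOpen_lt continuous_const (by fun_prop)).and
    ((isOpen_lt continuous_const (by fun_prop)).and
    (isOpen_lt continuous_const (by fun_prop))))).measurableSet)

lemma indicator_eq_dens (α β : ℝ) (p : ℝ×ℝ×ℝ) :
    Omega.indicator (fun p => ENNReal.ofReal (betaDens α β p)) p
      = dns α β p.1 p.2.1 p.2.2 := by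
  by_cases h : p ∈ Omega
  · rw [Set.indicator_of_mem h]
    unfold dns betaDens
    exact (if_pos h).symm
  · rw [Set.indicator_of_notMem h]
    unfold dns
    exact (if_neg h).symm

lemma mBetaDens (α β : ℝ) : Measurable (betaDens α β) := by
  unfold betaDens
  have h1 : Measurable (fun p : ℝ×ℝ×ℝ => (1-p.1)*(1-p.2.1)-p.2.2^2) := by fun_prop
  have h2 : Measurable (fun p : ℝ×ℝ×ℝ => p.1*p.2.1-p.2.2^2) := by fun_prop
  exact (h1.rpow_const' _).mul (h2.rpow_const' _)

lemma B2_repr (α β : ℝ) : B2 α β = (Cl α * (Jl β α * Jl (β-1/2) α)).toReal := by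
  have hnn : 0 ≤ᶠ[ae (volume.restrict Omega)] betaDens α β := by
    filter_upwards [ae_restrict_mem omega_measurableSet] with p hp
    exact mul_nonneg (Real.rpow_nonneg hp.2.2.2.le _) (Real.rpow_nonneg hp.2.2.1.le _)
  have h1 : B2 α β = (∫⁻ p in Omega, ENNReal.ofReal (betaDens α β p)).toReal :=
    integral_eq_lintegral_of_nonneg_ae hnn (mBetaDens α β).aestronglyMeasurable
  rw [h1, ← lintegral_indicator omega_measurableSet,
    lintegral_congr (indicator_eq_dens α β), triple]

end Aux

/-- B₂(α,β+1) = β(β−1/2)/((α+β)(α+β−1/2)) · B₂(α,β). -/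
theorem B2_beta_succ (α β : ℝ) (hα : 1/2 < α) (hβ : 1/2 < β) :
    B2 α (β + 1) = (β * (β - 1/2)) / ((α + β) * (α + β - 1/2)) * B2 α β := by
  have hα0 : 0 < α := by linarith
  have hβ0 : 0 < β := by linarith
  rw [B2_repr α (β+1), B2_repr α β]
  rw [show β + 1 - 1/2 = (β - 1/2) + 1 by ring]
  rw [Jl_eq (by linarith) hα0, Jl_eq (by linarith : (0:ℝ) < β - 1/2 + 1) hα0,
    Jl_eq hβ0 hα0, Jl_eq (by linarith : (0:ℝ) < β - 1/2) hα0]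
  have hJ1 : Jr (β + 1) α = β / (α + β) * Jr β α := by
    unfold Jr
    rw [show β + 1 = β + 1 by ring, Real.Gamma_add_one hβ0.ne',
      show β + 1 + α = (β + α) + 1 by ring, Real.Gamma_add_one (by positivity : (0:ℝ) < β + α).ne']
    have h1 : Real.Gamma (β + α) ≠ 0 := (Real.Gamma_pos_of_pos (by positivity)).ne'
    field_simp
    ring
  have hJ2 : Jr (β - 1/2 + 1) α = (β - 1/2) / (α + β - 1/2) * Jr (β - 1/2) α := by
    unfold Jr
    rw [Real.Gamma_add_one (by linarith : (0:ℝ) < β - 1/2).ne',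
      show β - 1/2 + 1 + α = (β - 1/2 + α) + 1 by ring,
      Real.Gamma_add_one (by linarith : (0:ℝ) < β - 1/2 + α).ne']
    have h1 : Real.Gamma (β - 1/2 + α) ≠ 0 := (Real.Gamma_pos_of_pos (by linarith)).ne'
    have h2 : α + β - 1/2 ≠ 0 := (by linarith : (0:ℝ) < α + β - 1/2).ne'
    rw [show α + β - 1/2 = β - 1/2 + α by ring] at h2 ⊢
    field_simp
  rw [hJ1, hJ2]
  have hab : (0:ℝ) < α + β := by linarith
  have hab2 : (0:ℝ) < α + β - 1/2 := by linarith
  have e1 : (0:ℝ) ≤ β / (α + β) * Jr β α :=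
    mul_nonneg (div_nonneg hβ0.le hab.le) (Jr_pos hβ0 hα0).le
  have e2 : (0:ℝ) ≤ (β - 1/2) / (α + β - 1/2) * Jr (β - 1/2) α :=
    mul_nonneg (div_nonneg (by linarith) hab2.le) (Jr_pos (by linarith) hα0).le
  simp only [ENNReal.toReal_mul]
  rw [ENNReal.toReal_ofReal e1, ENNReal.toReal_ofReal e2,
    ENNReal.toReal_ofReal (Jr_pos hβ0 hα0).le,
    ENNReal.toReal_ofReal (Jr_pos (by linarith : (0:ℝ) < β - 1/2) hα0).le]
  field_simp
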